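/- Let X be an infinite set and let G be a subgroup of Sym(X) with FSym(X) ≤ G. Then FSym(X) is characteristic in G, i.e. every automorphism of G maps FSym(X) onto FSym(X). -/

import Mathlib

/-- `FSym X`: the subgroup of `Equiv.Perm X` of permutations with finite support. -/
def FSym (X : Type*) : Subgroup (Equiv.Perm X) where
  carrier := {σ | {x | σ x ≠ x}.Finite}
  one_mem' := by simp
  mul_mem' := by
    intro a b ha hb
    refine (ha.union hb).subset fun x hx => ?_
    by_cases h1 : a x = x
    · by_cases h2 : b x = x
      · exact absurd (by simp [Equiv.Perm.mul_apply, h2, h1]) hx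
      · exact Or.inr h2
    · exact Or.inl h1
  inv_mem' := by
    intro a ha
    refine ha.subset fun x hx => ?_
    intro h
    exact hx (by nth_rewrite 1 [← h]; exact Equiv.symm_apply_apply a x)

open Equiv

section Aux

variable {X : Type*} [DecidableEq X]


variable {X : Type*} [DecidableEq X]

set_option maxHeartbeats 1000000 in
lemma cube_swap (u v w : X) (huv : u ≠ v) (huw : u ≠ w) (hvw : v ≠ w) :
    (Equiv.swap u v * Equiv.swap v w) ^ 3 = 1 := by
  have h1 := huv.symm; have h2 := huw.symm; have h3 := hvw.symm
  ext z
  by_cases hz1 : z = u <;> by_cases hz2 : z = v <;> by_cases hz3 : z = w <;>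
    simp_all [pow_succ, Equiv.Perm.mul_apply, Equiv.swap_apply_def]

set_option maxHeartbeats 1000000 in
lemma sq_swap_disj (x y a b : X) (hxy : x ≠ y) (hab : a ≠ b)
    (hax : a ≠ x) (hay : a ≠ y) (hbx : b ≠ x) (hby : b ≠ y) :
    (Equiv.swap x y * Equiv.swap a b) ^ 2 = 1 := by
  have h1 := hax.symm; have h2 := hay.symm; have h3 := hbx.symm; have h4 := hby.symm
  have h5 := hxy.symm; have h6 := hab.symm
  ext z
  by_cases hz1 : z = x <;> by_cases hz2 : z = y <;> by_cases hz3 : z = a <;> by_cases hz4 : z = b <;>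
    simp_all [pow_succ, Equiv.Perm.mul_apply, Equiv.swap_apply_def]

lemma swap_mul_swap_pow_six (x y a b : X) (hxy : x ≠ y) (hab : a ≠ b) :
    (Equiv.swap x y * Equiv.swap a b) ^ 6 = 1 := by
  have h3 : ∀ g : Equiv.Perm X, g ^ 3 = 1 → g ^ 6 = 1 := by
    intro g h; rw [show (6 : ℕ) = 3 * 2 from rfl, pow_mul, h, one_pow]
  have h2 : ∀ g : Equiv.Perm X, g ^ 2 = 1 → g ^ 6 = 1 := by
    intro g h; rw [show (6 : ℕ) = 2 * 3 from rfl, pow_mul, h, one_pow]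
  rcases eq_or_ne a x with rfl | hax
  · rcases eq_or_ne b y with rfl | hby
    · rw [Equiv.swap_mul_self]; exact one_pow _
    · refine h3 _ ?_
      rw [Equiv.swap_comm a y]
      exact cube_swap y a b hxy.symm (Ne.symm hby) hab
  · rcases eq_or_ne a y with rfl | hay
    · rcases eq_or_ne b x with rfl | hbx
      · rw [Equiv.swap_comm a b, Equiv.swap_mul_self]; exact one_pow _
      · exact h3 _ (cube_swap x a b hxy hbx.symm hab)
    · rcases eq_or_ne b x with rfl | hbx
      · rw [Equiv.swap_comm a b]
        exact h3 _ (by rw [Equiv.swap_comm b y]; exact cube_swap y b a hxy.symm hay.symm hax.symm)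
      · rcases eq_or_ne b y with rfl | hby
        · rw [Equiv.swap_comm a b]
          exact h3 _ (cube_swap x b a hxy hax.symm hay.symm)
        · exact h2 _ (sq_swap_disj x y a b hxy hab hax hay hbx hby)

variable [Infinite X]


set_option maxHeartbeats 2000000 in
lemma exists_bad_conjugate (t : Equiv.Perm X) (h2 : t * t = 1) (h1 : t ≠ 1)
    (hns : ¬ t.IsSwap) :
    ∃ π : Equiv.Perm X, {x | π x ≠ x}.Finite ∧ (t * (π * t * π⁻¹)) ^ 6 ≠ 1 := by
  have htt : ∀ z, t (t z) = z := by
    intro z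
    have : (t * t) z = (1 : Equiv.Perm X) z := by rw [h2]
    simpa using this
  have tinj : Function.Injective t := t.injective
  obtain ⟨a, ha⟩ : ∃ a, t a ≠ a := by
    by_contra h; push_neg at h; exact h1 (Equiv.ext fun z => by simpa using h z)
  obtain ⟨b, hta⟩ : ∃ b, t a = b := ⟨_, rfl⟩
  have htb : t b = a := by rw [← hta]; exact htt a
  have nab : a ≠ b := fun h => ha (h ▸ hta)
  obtain ⟨c, hc, hca, hcb⟩ : ∃ c, t c ≠ c ∧ c ≠ a ∧ c ≠ b := by
    by_contra h; push_neg at h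
    refine hns ⟨a, b, nab, Equiv.ext fun z => ?_⟩
    rcases eq_or_ne z a with rfl | hza
    · rw [hta, Equiv.swap_apply_left]
    rcases eq_or_ne z b with rfl | hzb
    · rw [htb, Equiv.swap_apply_right]
    · rw [Equiv.swap_apply_of_ne_of_ne hza hzb]
      by_contra hz
      exact hzb (h z hz hza)
  obtain ⟨d, htc⟩ : ∃ d, t c = d := ⟨_, rfl⟩
  have htd : t d = c := by rw [← htc]; exact htt c
  have ncd : c ≠ d := fun h => hc (h ▸ htc)
  have nda : d ≠ a := by intro h; apply hcb; rw [← htd, h, hta]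
  have ndb : d ≠ b := by
    intro h; apply hca
    have h' : t d = t b := by rw [h]
    rw [htd, htb] at h'; exact h'
  have nac : a ≠ c := hca.symm
  have nca := hca
  have nad : a ≠ d := nda.symm
  have nbc : b ≠ c := hcb.symm
  have nbd : b ≠ d := ndb.symm
  have nba := nab.symm
  have ncb := nbc.symm
  have ndc := ncd.symm
  by_cases hfix : ∃ e, t e = e
  · -- Case A : t has a fixed point e; use π = (b c)(d e)
    obtain ⟨e, he⟩ := hfix
    have nea : e ≠ a := fun h => ha (h ▸ he)
    have neb : e ≠ b := fun h => nab (htb.symm.trans (h ▸ he))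
    have nec : e ≠ c := fun h => hc (h ▸ he)
    have ned : e ≠ d := fun h => ncd (htd.symm.trans (h ▸ he))
    have nae := nea.symm; have nbe := neb.symm; have nce := nec.symm; have nde := ned.symm
    refine ⟨Equiv.swap b c * Equiv.swap d e, ?_, ?_⟩
    · refine Set.Finite.subset (Set.toFinite {b, c, d, e}) fun z hz => ?_
      simp only [Set.mem_setOf_eq] at hz
      by_contra hzn
      simp only [Set.mem_insert_iff, Set.mem_singleton_iff, not_or] at hzn
      obtain ⟨h1', h2', h3', h4'⟩ := hzn
      apply hz
      simp [Equiv.Perm.mul_apply, Equiv.swap_apply_of_ne_of_ne, h1', h2', h3', h4']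
    · set π := Equiv.swap b c * Equiv.swap d e with hπ
      have hπinv : π⁻¹ = Equiv.swap d e * Equiv.swap b c := by
        rw [hπ, mul_inv_rev, Equiv.swap_inv, Equiv.swap_inv]
      have key : ∀ z w u v, π⁻¹ z = w → t w = u → π u = v →
          (t * (π * t * π⁻¹)) z = t v := by
        intro z w u v e1 e2 e3
        simp only [Equiv.Perm.mul_apply, e1, e2, e3]
      have hfa : (t * (π * t * π⁻¹)) a = d := by
        rw [key a a b c _ hta _, htc]
        · rw [hπinv]; simp [Equiv.Perm.mul_apply, Equiv.swap_apply_def, nab, nac, nad, nae, nba, nbc, nbd, nbe, nca, ncb, ncd, nce, nda, ndb, ndc, nde, nea, neb, nec, ned]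
        · rw [hπ]; simp [Equiv.Perm.mul_apply, Equiv.swap_apply_def, nab, nac, nad, nae, nba, nbc, nbd, nbe, nca, ncb, ncd, nce, nda, ndb, ndc, nde, nea, neb, nec, ned]
      have hfd : (t * (π * t * π⁻¹)) d = c := by
        rw [key d e e d _ he _, htd]
        · rw [hπinv]; simp [Equiv.Perm.mul_apply, Equiv.swap_apply_def, nab, nac, nad, nae, nba, nbc, nbd, nbe, nca, ncb, ncd, nce, nda, ndb, ndc, nde, nea, neb, nec, ned]
        · rw [hπ]; simp [Equiv.Perm.mul_apply, Equiv.swap_apply_def, nab, nac, nad, nae, nba, nbc, nbd, nbe, nca, ncb, ncd, nce, nda, ndb, ndc, nde, nea, neb, nec, ned]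
      have hfc : (t * (π * t * π⁻¹)) c = b := by
        rw [key c b a a _ htb _, hta]
        · rw [hπinv]; simp [Equiv.Perm.mul_apply, Equiv.swap_apply_def, nab, nac, nad, nae, nba, nbc, nbd, nbe, nca, ncb, ncd, nce, nda, ndb, ndc, nde, nea, neb, nec, ned]
        · rw [hπ]; simp [Equiv.Perm.mul_apply, Equiv.swap_apply_def, nab, nac, nad, nae, nba, nbc, nbd, nbe, nca, ncb, ncd, nce, nda, ndb, ndc, nde, nea, neb, nec, ned]
      have hfb : (t * (π * t * π⁻¹)) b = e := by
        rw [key b c d e _ htc _, he]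
        · rw [hπinv]; simp [Equiv.Perm.mul_apply, Equiv.swap_apply_def, nab, nac, nad, nae, nba, nbc, nbd, nbe, nca, ncb, ncd, nce, nda, ndb, ndc, nde, nea, neb, nec, ned]
        · rw [hπ]; simp [Equiv.Perm.mul_apply, Equiv.swap_apply_def, nab, nac, nad, nae, nba, nbc, nbd, nbe, nca, ncb, ncd, nce, nda, ndb, ndc, nde, nea, neb, nec, ned]
      have hfe : (t * (π * t * π⁻¹)) e = a := by
        rw [key e d c b _ htd _, htb]
        · rw [hπinv]; simp [Equiv.Perm.mul_apply, Equiv.swap_apply_def, nab, nac, nad, nae, nba, nbc, nbd, nbe, nca, ncb, ncd, nce, nda, ndb, ndc, nde, nea, neb, nec, ned]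
        · rw [hπ]; simp [Equiv.Perm.mul_apply, Equiv.swap_apply_def, nab, nac, nad, nae, nba, nbc, nbd, nbe, nca, ncb, ncd, nce, nda, ndb, ndc, nde, nea, neb, nec, ned]
      intro hcon
      set f := t * (π * t * π⁻¹) with hf
      have h6 : (f ^ 6) a = d := by
        simp only [pow_succ, pow_zero, one_mul, Equiv.Perm.mul_apply]
        rw [hfa, hfd, hfc, hfb, hfe, hfa]
      rw [hcon] at h6
      exact nad (by simpa using h6)
  · -- Case B : t has no fixed point; use pairs (a b)(c d)(a3 b3)(a4 b4)
    push_neg at hfix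
    classical
    obtain ⟨a3, ha3⟩ := Infinite.exists_notMem_finset ({a, b, c, d} : Finset X)
    simp only [Finset.mem_insert, Finset.mem_singleton, not_or] at ha3
    obtain ⟨m3a, m3b, m3c, m3d⟩ := ha3
    have n3a : a3 ≠ a := m3a
    have n3b : a3 ≠ b := m3b
    have n3c : a3 ≠ c := m3c
    have n3d : a3 ≠ d := m3d
    obtain ⟨b3, hta3⟩ : ∃ w, t a3 = w := ⟨_, rfl⟩
    have htb3 : t b3 = a3 := by rw [← hta3]; exact htt a3
    have n33 : b3 ≠ a3 := fun h => hfix a3 (hta3.trans h)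
    have nb3a : b3 ≠ a := by intro h; apply n3b; rw [← htb3, h, hta]
    have nb3b : b3 ≠ b := by intro h; apply n3a; rw [← htb3, h, htb]
    have nb3c : b3 ≠ c := by intro h; apply n3d; rw [← htb3, h, htc]
    have nb3d : b3 ≠ d := by intro h; apply n3c; rw [← htb3, h, htd]
    obtain ⟨a4, ha4⟩ := Infinite.exists_notMem_finset ({a, b, c, d, a3, b3} : Finset X)
    simp only [Finset.mem_insert, Finset.mem_singleton, not_or] at ha4
    obtain ⟨m4a, m4b, m4c, m4d, m4a3, m4b3⟩ := ha4
    have n4a : a4 ≠ a := m4a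
    have n4b : a4 ≠ b := m4b
    have n4c : a4 ≠ c := m4c
    have n4d : a4 ≠ d := m4d
    have n4a3 : a4 ≠ a3 := m4a3
    have n4b3 : a4 ≠ b3 := m4b3
    obtain ⟨b4, hta4⟩ : ∃ w, t a4 = w := ⟨_, rfl⟩
    have htb4 : t b4 = a4 := by rw [← hta4]; exact htt a4
    have n44 : b4 ≠ a4 := fun h => hfix a4 (hta4.trans h)
    have nb4a : b4 ≠ a := by intro h; apply n4b; rw [← htb4, h, hta]
    have nb4b : b4 ≠ b := by intro h; apply n4a; rw [← htb4, h, htb]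
    have nb4c : b4 ≠ d := by intro h; apply n4c; rw [← htb4, h, htd]
    have nb4c' : b4 ≠ c := by intro h; apply n4d; rw [← htb4, h, htc]
    have nb4a3 : b4 ≠ a3 := by intro h; apply n4b3; rw [← htb4, h, hta3]
    have nb4b3 : b4 ≠ b3 := by intro h; apply n4a3; rw [← htb4, h, htb3]
    refine ⟨Equiv.swap c b * Equiv.swap a3 d * Equiv.swap a4 b3, ?_, ?_⟩
    · refine Set.Finite.subset (Set.toFinite {c, b, a3, d, a4, b3}) fun z hz => ?_
      simp only [Set.mem_setOf_eq] at hz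
      by_contra hzn
      simp only [Set.mem_insert_iff, Set.mem_singleton_iff, not_or] at hzn
      obtain ⟨m1, m2, m3, m4, m5, m6⟩ := hzn
      apply hz
      simp [Equiv.Perm.mul_apply, Equiv.swap_apply_of_ne_of_ne, m1, m2, m3, m4, m5, m6]
    · set π := Equiv.swap c b * Equiv.swap a3 d * Equiv.swap a4 b3 with hπ
      have hπinv : π⁻¹ = Equiv.swap a4 b3 * (Equiv.swap a3 d * Equiv.swap c b) := by
        rw [hπ, mul_inv_rev, mul_inv_rev, Equiv.swap_inv, Equiv.swap_inv, Equiv.swap_inv]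
      have key : ∀ z w u v, π⁻¹ z = w → t w = u → π u = v →
          (t * (π * t * π⁻¹)) z = t v := by
        intro z w u v e1 e2 e3
        simp only [Equiv.Perm.mul_apply, e1, e2, e3]
      have hfa : (t * (π * t * π⁻¹)) a = d := by
        rw [key a a b c _ hta _, htc]
        · rw [hπinv]
          simp [Equiv.Perm.mul_apply, Equiv.swap_apply_def, nab, nac, nad, nba, nbc, nbd, nca, ncb, ncd, nda, ndb, ndc, n3a, n3b, n3c, n3d, n33, n33.symm, nb3a, nb3b, nb3c, nb3d, n3a.symm, n3b.symm, n3c.symm, n3d.symm, nb3a.symm, nb3b.symm, nb3c.symm, nb3d.symm, n4a, n4b, n4c, n4d, n4a3, n4b3, n44, n44.symm, nb4a, nb4b, nb4c, nb4c', nb4a3, nb4b3, n4a.symm, n4b.symm, n4c.symm, n4d.symm, n4a3.symm, n4b3.symm, nb4a.symm, nb4b.symm, nb4c.symm, nb4c'.symm, nb4a3.symm, nb4b3.symm]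
        · rw [hπ]
          simp [Equiv.Perm.mul_apply, Equiv.swap_apply_def, nab, nac, nad, nba, nbc, nbd, nca, ncb, ncd, nda, ndb, ndc, n3a, n3b, n3c, n3d, n33, n33.symm, nb3a, nb3b, nb3c, nb3d, n3a.symm, n3b.symm, n3c.symm, n3d.symm, nb3a.symm, nb3b.symm, nb3c.symm, nb3d.symm, n4a, n4b, n4c, n4d, n4a3, n4b3, n44, n44.symm, nb4a, nb4b, nb4c, nb4c', nb4a3, nb4b3, n4a.symm, n4b.symm, n4c.symm, n4d.symm, n4a3.symm, n4b3.symm, nb4a.symm, nb4b.symm, nb4c.symm, nb4c'.symm, nb4a3.symm, nb4b3.symm]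
      have hfd : (t * (π * t * π⁻¹)) d = b4 := by
        rw [key d a3 b3 a4 _ hta3 _, hta4]
        · rw [hπinv]
          simp [Equiv.Perm.mul_apply, Equiv.swap_apply_def, nab, nac, nad, nba, nbc, nbd, nca, ncb, ncd, nda, ndb, ndc, n3a, n3b, n3c, n3d, n33, n33.symm, nb3a, nb3b, nb3c, nb3d, n3a.symm, n3b.symm, n3c.symm, n3d.symm, nb3a.symm, nb3b.symm, nb3c.symm, nb3d.symm, n4a, n4b, n4c, n4d, n4a3, n4b3, n44, n44.symm, nb4a, nb4b, nb4c, nb4c', nb4a3, nb4b3, n4a.symm, n4b.symm, n4c.symm, n4d.symm, n4a3.symm, n4b3.symm, nb4a.symm, nb4b.symm, nb4c.symm, nb4c'.symm, nb4a3.symm, nb4b3.symm]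
        · rw [hπ]
          simp [Equiv.Perm.mul_apply, Equiv.swap_apply_def, nab, nac, nad, nba, nbc, nbd, nca, ncb, ncd, nda, ndb, ndc, n3a, n3b, n3c, n3d, n33, n33.symm, nb3a, nb3b, nb3c, nb3d, n3a.symm, n3b.symm, n3c.symm, n3d.symm, nb3a.symm, nb3b.symm, nb3c.symm, nb3d.symm, n4a, n4b, n4c, n4d, n4a3, n4b3, n44, n44.symm, nb4a, nb4b, nb4c, nb4c', nb4a3, nb4b3, n4a.symm, n4b.symm, n4c.symm, n4d.symm, n4a3.symm, n4b3.symm, nb4a.symm, nb4b.symm, nb4c.symm, nb4c'.symm, nb4a3.symm, nb4b3.symm]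
      have hfb4 : (t * (π * t * π⁻¹)) b4 = a3 := by
        rw [key b4 b4 a4 b3 _ htb4 _, htb3]
        · rw [hπinv]
          simp [Equiv.Perm.mul_apply, Equiv.swap_apply_def, nab, nac, nad, nba, nbc, nbd, nca, ncb, ncd, nda, ndb, ndc, n3a, n3b, n3c, n3d, n33, n33.symm, nb3a, nb3b, nb3c, nb3d, n3a.symm, n3b.symm, n3c.symm, n3d.symm, nb3a.symm, nb3b.symm, nb3c.symm, nb3d.symm, n4a, n4b, n4c, n4d, n4a3, n4b3, n44, n44.symm, nb4a, nb4b, nb4c, nb4c', nb4a3, nb4b3, n4a.symm, n4b.symm, n4c.symm, n4d.symm, n4a3.symm, n4b3.symm, nb4a.symm, nb4b.symm, nb4c.symm, nb4c'.symm, nb4a3.symm, nb4b3.symm]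
        · rw [hπ]
          simp [Equiv.Perm.mul_apply, Equiv.swap_apply_def, nab, nac, nad, nba, nbc, nbd, nca, ncb, ncd, nda, ndb, ndc, n3a, n3b, n3c, n3d, n33, n33.symm, nb3a, nb3b, nb3c, nb3d, n3a.symm, n3b.symm, n3c.symm, n3d.symm, nb3a.symm, nb3b.symm, nb3c.symm, nb3d.symm, n4a, n4b, n4c, n4d, n4a3, n4b3, n44, n44.symm, nb4a, nb4b, nb4c, nb4c', nb4a3, nb4b3, n4a.symm, n4b.symm, n4c.symm, n4d.symm, n4a3.symm, n4b3.symm, nb4a.symm, nb4b.symm, nb4c.symm, nb4c'.symm, nb4a3.symm, nb4b3.symm]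
      have hfa3 : (t * (π * t * π⁻¹)) a3 = a := by
        rw [key a3 d c b _ htd _, htb]
        · rw [hπinv]
          simp [Equiv.Perm.mul_apply, Equiv.swap_apply_def, nab, nac, nad, nba, nbc, nbd, nca, ncb, ncd, nda, ndb, ndc, n3a, n3b, n3c, n3d, n33, n33.symm, nb3a, nb3b, nb3c, nb3d, n3a.symm, n3b.symm, n3c.symm, n3d.symm, nb3a.symm, nb3b.symm, nb3c.symm, nb3d.symm, n4a, n4b, n4c, n4d, n4a3, n4b3, n44, n44.symm, nb4a, nb4b, nb4c, nb4c', nb4a3, nb4b3, n4a.symm, n4b.symm, n4c.symm, n4d.symm, n4a3.symm, n4b3.symm, nb4a.symm, nb4b.symm, nb4c.symm, nb4c'.symm, nb4a3.symm, nb4b3.symm]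
        · rw [hπ]
          simp [Equiv.Perm.mul_apply, Equiv.swap_apply_def, nab, nac, nad, nba, nbc, nbd, nca, ncb, ncd, nda, ndb, ndc, n3a, n3b, n3c, n3d, n33, n33.symm, nb3a, nb3b, nb3c, nb3d, n3a.symm, n3b.symm, n3c.symm, n3d.symm, nb3a.symm, nb3b.symm, nb3c.symm, nb3d.symm, n4a, n4b, n4c, n4d, n4a3, n4b3, n44, n44.symm, nb4a, nb4b, nb4c, nb4c', nb4a3, nb4b3, n4a.symm, n4b.symm, n4c.symm, n4d.symm, n4a3.symm, n4b3.symm, nb4a.symm, nb4b.symm, nb4c.symm, nb4c'.symm, nb4a3.symm, nb4b3.symm]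
      intro hcon
      set f := t * (π * t * π⁻¹) with hf
      have h6 : (f ^ 6) a = b4 := by
        simp only [pow_succ, pow_zero, one_mul, Equiv.Perm.mul_apply]
        rw [hfa, hfd, hfb4, hfa3, hfa, hfd]
      rw [hcon] at h6
      exact nb4a (by simpa using h6.symm)

end Aux

lemma mem_FSym_iff {X : Type*} {σ : Equiv.Perm X} : σ ∈ FSym X ↔ {x | σ x ≠ x}.Finite :=
  Iff.rfl

lemma isSwap_mem_FSym {X : Type*} [DecidableEq X] {σ : Equiv.Perm X}
    (h : σ.IsSwap) : σ ∈ FSym X := by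
  obtain ⟨x, y, hxy, rfl⟩ := h
  refine mem_FSym_iff.mpr (Set.Finite.subset (Set.toFinite {x, y}) fun z hz => ?_)
  simp only [Set.mem_setOf_eq] at hz
  by_contra hzn
  simp only [Set.mem_insert_iff, Set.mem_singleton_iff, not_or] at hzn
  exact hz (Equiv.swap_apply_of_ne_of_ne hzn.1 hzn.2)

lemma mem_closure_swaps {X : Type*} [DecidableEq X] (G : Subgroup (Equiv.Perm X))
    (hG : FSym X ≤ G) :
    ∀ (n : ℕ) (σ : Equiv.Perm X) (hfin : {x | σ x ≠ x}.Finite), hfin.toFinset.card ≤ n →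
      ∀ (hσ : σ ∈ G),
        (⟨σ, hσ⟩ : ↥G) ∈ Subgroup.closure {g : ↥G | Equiv.Perm.IsSwap (g : Equiv.Perm X)} := by
  intro n
  induction n with
  | zero =>
    intro σ hfin hcard hσ
    have h1 : σ = 1 := by
      ext z
      by_contra hz
      simp only [Equiv.Perm.one_apply] at hz
      have hzm : z ∈ hfin.toFinset := by simpa [Set.Finite.mem_toFinset] using hz
      have := Finset.card_pos.mpr ⟨z, hzm⟩
      omega
    subst h1
    exact Subgroup.one_mem _
  | succ n ih =>
    intro σ hfin hcard hσ
    by_cases hex : ∃ x, σ x ≠ x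
    · obtain ⟨x, hx⟩ := hex
      have hne : x ≠ σ x := Ne.symm hx
      have hτfix : (Equiv.swap x (σ x) * σ) x = x := by
        simp [Equiv.Perm.mul_apply]
      have hsub : {z | (Equiv.swap x (σ x) * σ) z ≠ z} ⊆ {z | σ z ≠ z} \ {x} := by
        intro z hz
        simp only [Set.mem_setOf_eq] at hz
        by_cases hzx : z = x
        · exact absurd (hzx ▸ hτfix) hz
        · refine ⟨fun hσz => ?_, hzx⟩
          have hzσx : z ≠ σ x := by
            intro h
            rw [h] at hσz
            exact hx (σ.injective hσz)
          apply hz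
          simp only [Equiv.Perm.mul_apply, hσz]
          exact Equiv.swap_apply_of_ne_of_ne hzx hzσx
      have hτfin : {z | (Equiv.swap x (σ x) * σ) z ≠ z}.Finite :=
        Set.Finite.subset hfin (hsub.trans Set.diff_subset)
      have hxm : x ∈ hfin.toFinset := by simpa [Set.Finite.mem_toFinset] using hx
      have hcard' : hτfin.toFinset.card ≤ n := by
        have hss : hτfin.toFinset ⊆ hfin.toFinset.erase x := by
          intro z hz
          rw [Set.Finite.mem_toFinset] at hz
          obtain ⟨hz1, hz2⟩ := hsub hz
          exact Finset.mem_erase.mpr ⟨hz2, (Set.Finite.mem_toFinset hfin).mpr hz1⟩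
        have h1 := Finset.card_le_card hss
        have h2 := Finset.card_erase_of_mem hxm
        have h3 := Finset.card_pos.mpr ⟨x, hxm⟩
        omega
      have hτG : Equiv.swap x (σ x) * σ ∈ G := hG hτfin
      have hswapG : Equiv.swap x (σ x) ∈ G := hG (isSwap_mem_FSym ⟨x, σ x, hne, rfl⟩)
      have heq : (⟨σ, hσ⟩ : ↥G) =
          ⟨Equiv.swap x (σ x), hswapG⟩ * ⟨Equiv.swap x (σ x) * σ, hτG⟩ :=
        Subtype.ext (by
          show σ = Equiv.swap x (σ x) * (Equiv.swap x (σ x) * σ)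
          rw [← mul_assoc, Equiv.swap_mul_self, one_mul])
      rw [heq]
      exact Subgroup.mul_mem _ (Subgroup.subset_closure ⟨x, σ x, hne, rfl⟩)
        (ih _ hτfin hcard' hτG)
    · push_neg at hex
      have h1 : σ = 1 := Equiv.ext fun z => by simpa using hex z
      subst h1
      exact Subgroup.one_mem _

theorem fSym_characteristic {X : Type*} [Infinite X]
    (G : Subgroup (Equiv.Perm X)) (hG : FSym X ≤ G) :
    ∀ φ : ↥G ≃* ↥G,
      Subgroup.map (φ : ↥G →* ↥G) ((FSym X).subgroupOf G) = (FSym X).subgroupOf G := by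
  classical
  have key : ∀ ψ : ↥G ≃* ↥G,
      Subgroup.map (ψ : ↥G →* ↥G) ((FSym X).subgroupOf G) ≤ (FSym X).subgroupOf G := by
    intro ψ
    have hclo : ((FSym X).subgroupOf G) =
        Subgroup.closure {g : ↥G | Equiv.Perm.IsSwap (g : Equiv.Perm X)} := by
      apply le_antisymm
      · intro g hg
        have hfin : {x | (g : Equiv.Perm X) x ≠ x}.Finite := Subgroup.mem_subgroupOf.mp hg
        exact mem_closure_swaps G hG hfin.toFinset.card (g : Equiv.Perm X) hfin le_rfl g.2
      · rw [Subgroup.closure_le]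
        intro g hg
        exact Subgroup.mem_subgroupOf.mpr (isSwap_mem_FSym hg)
    nth_rewrite 1 [hclo]
    rw [MonoidHom.map_closure, Subgroup.closure_le]
    rintro - ⟨g, hg, rfl⟩
    obtain ⟨x, y, hxy, hg'⟩ := hg
    set s := ψ g with hs
    have hgg : g * g = 1 := Subtype.ext (by
      show (g : Equiv.Perm X) * g = 1
      rw [hg', Equiv.swap_mul_self])
    have hs2 : (s : Equiv.Perm X) * s = 1 := by
      have : s * s = 1 := by rw [hs, ← map_mul, hgg, map_one]
      exact_mod_cast congrArg (Subtype.val) this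
    have hs1 : (s : Equiv.Perm X) ≠ 1 := by
      intro h
      have hs1' : s = 1 := Subtype.ext h
      have : g = 1 := ψ.injective (by rw [← hs, hs1', map_one])
      have : (g : Equiv.Perm X) x = x := by rw [this]; rfl
      rw [hg', Equiv.swap_apply_left] at this
      exact hxy this.symm
    have hprop : ∀ π : Equiv.Perm X, π ∈ G →
        ((s : Equiv.Perm X) * (π * (s : Equiv.Perm X) * π⁻¹)) ^ 6 = 1 := by
      intro π hπ
      set q : ↥G := ψ.symm ⟨π, hπ⟩ with hq
      have hψq : ψ q = ⟨π, hπ⟩ := ψ.apply_symm_apply _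
      have inner : (g * (q * g * q⁻¹)) ^ 6 = 1 := by
        apply Subtype.ext
        show ((g * (q * g * q⁻¹)) ^ 6 : ↥G).val = 1
        push_cast
        rw [hg', ← Equiv.swap_apply_apply]
        exact swap_mul_swap_pow_six x y _ _ hxy ((q : Equiv.Perm X).injective.ne hxy)
      have houter : (s * (⟨π, hπ⟩ * s * (⟨π, hπ⟩ : ↥G)⁻¹)) ^ 6 = 1 := by
        rw [hs, ← hψq, ← map_inv, ← map_mul, ← map_mul, ← map_mul, ← map_pow, inner, map_one]
      calc ((s : Equiv.Perm X) * (π * (s : Equiv.Perm X) * π⁻¹)) ^ 6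
          = ((s * (⟨π, hπ⟩ * s * (⟨π, hπ⟩ : ↥G)⁻¹)) ^ 6 : ↥G).val := by push_cast; rfl
        _ = 1 := by rw [houter]; rfl
    have hsw : Equiv.Perm.IsSwap (s : Equiv.Perm X) := by
      by_contra hns
      obtain ⟨π, hπfin, hbad⟩ := exists_bad_conjugate (s : Equiv.Perm X) hs2 hs1 hns
      exact hbad (by
        have := hprop π (hG hπfin)
        calc ((s : Equiv.Perm X) * (π * (s : Equiv.Perm X) * π⁻¹)) ^ 6
            = ((s : Equiv.Perm X) * (π * (s : Equiv.Perm X) * π⁻¹)) ^ 6 := rfl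
          _ = 1 := this)
    exact Subgroup.mem_subgroupOf.mpr (isSwap_mem_FSym hsw)
  intro φ
  refine le_antisymm (key φ) fun g hg => ?_
  have h1 : φ.symm g ∈ (FSym X).subgroupOf G := key φ.symm ⟨g, hg, rfl⟩
  exact ⟨φ.symm g, h1, φ.apply_symm_apply g⟩
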